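/- If a vector α ∈ ℝ^{(M−1)K+1} satisfies α^T R̃^c = 0, then α = 0; that is, the rows of the SC-FM combination matrix R̃^c are linearly independent. -/

import Mathlib

/-- The SC-FM combination matrix `R̃^c`: rows indexed by pairs `(k, m)` with `k ∈ [K]`,
`m ∈ [M-1]` (representing the value `m + 1 ∈ {1, …, M-1}`) together with one extra row;
columns indexed by tuples `f = (m_1, …, m_K)` with each `m_k ∈ {0, 1, …, M-1}`.
The entry at row `(k, m)` and column `f` is `1` if `m_k = m` and `0` otherwise, and the
entry of the extra row at column `f` is the number of indices `k` with `m_k = 0`. -/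
def scCombMatrix (M K : ℕ) : Matrix ((Fin K × Fin (M - 1)) ⊕ Unit) (Fin K → Fin M) ℝ :=
  fun r f =>
    match r with
    | Sum.inl (k, m) => if (f k : ℕ) = (m : ℕ) + 1 then 1 else 0
    | Sum.inr _ => ((Finset.univ.filter fun k => (f k : ℕ) = 0).card : ℝ)

open Matrix in
/-- If `αᵀ R̃^c = 0` then `α = 0`: the rows of the SC-FM combination matrix are
linearly independent. -/
theorem scCombMatrix_rows_linearIndependent (M K : ℕ) (hM : 1 ≤ M) (hK : 1 ≤ K)
    (α : (Fin K × Fin (M - 1)) ⊕ Unit → ℝ)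
    (hα : α ᵥ* scCombMatrix M K = 0) : α = 0 := by
  have hcol : ∀ f : Fin K → Fin M,
      (∑ p : Fin K × Fin (M-1), α (Sum.inl p) * scCombMatrix M K (Sum.inl p) f)
      + α (Sum.inr ()) * scCombMatrix M K (Sum.inr ()) f = 0 := by
    intro f
    have h := congrFun hα f
    simpa [Matrix.vecMul, dotProduct, Fintype.sum_sum_type] using h
  have h0 : α (Sum.inr ()) = 0 := by
    have h := hcol (fun _ => ⟨0, hM⟩)
    simp [scCombMatrix, Finset.filter_true_of_mem] at h
    rcases h with h | h
    · exact h
    · omega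
  have h1 : ∀ k : Fin K, ∀ m : Fin (M-1), α (Sum.inl (k, m)) = 0 := by
    intro k m
    have hm1 : (m : ℕ) + 1 < M := by omega
    have h := hcol (fun j => if j = k then ⟨(m:ℕ)+1, hm1⟩ else ⟨0, hM⟩)
    rw [Finset.sum_eq_single (k, m)] at h
    · simp [scCombMatrix, h0] at h
      exact h
    · intro p _ hp
      simp only [scCombMatrix]
      rcases p with ⟨k', m'⟩
      by_cases hk : k' = k
      · subst hk
        have hne : m' ≠ m := by simpa [Prod.ext_iff] using hp
        have hmm : ¬ ((m:ℕ) + 1 = (m':ℕ) + 1) := by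
          intro hmm
          exact hne (Fin.val_injective (by omega))
        simp [scCombMatrix, hmm]
        intro hmm'
        exact absurd hmm' (by omega)
      · simp [hk]
    · simp
  funext r
  rcases r with ⟨k, m⟩ | ⟨⟩
  · exact h1 k m
  · exact h0
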